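/- Let 1/2 < H < 1 and let ρ be a real number with -1 < ρ < 2(H-1). Then the series ∑_{j ∈ ℤ²₀} |j|^{2ρ+2} · ( ∑_{h ∈ ℤ²₀, h ≠ j} |h|^{2ρ+2} / (|h|^{4H} |h-j|^{4H}) )² converges (is finite). -/

import Mathlib

noncomputable def znorm (k : ℤ × ℤ) : ℝ :=
  Real.sqrt ((k.1 : ℝ) ^ 2 + (k.2 : ℝ) ^ 2)

lemma znorm_nonneg (k : ℤ × ℤ) : 0 ≤ znorm k := Real.sqrt_nonneg _

noncomputable def zc (k : ℤ × ℤ) : ℂ := ⟨(k.1 : ℝ), (k.2 : ℝ)⟩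

lemma znorm_eq_norm (k : ℤ × ℤ) : znorm k = ‖zc k‖ := by
  rw [Complex.norm_def, Complex.normSq_apply, znorm]
  simp only [zc]
  congr 1
  ring

lemma zc_sub (h j : ℤ × ℤ) : zc (h - j) = zc h - zc j := by
  apply Complex.ext <;> simp [zc]

lemma one_le_znorm {k : ℤ × ℤ} (hk : k ≠ 0) : 1 ≤ znorm k := by
  have hor : k.1 ≠ 0 ∨ k.2 ≠ 0 := by
    by_contra hc; push_neg at hc; exact hk (Prod.ext hc.1 hc.2)
  have h2 : (1 : ℤ) ≤ k.1 ^ 2 + k.2 ^ 2 := by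
    rcases hor with h | h
    · nlinarith [Int.one_le_abs h, sq_abs k.1, sq_nonneg k.2, abs_nonneg k.1]
    · nlinarith [Int.one_le_abs h, sq_abs k.2, sq_nonneg k.1, abs_nonneg k.2]
  have h1 : (1 : ℝ) ≤ (k.1 : ℝ) ^ 2 + (k.2 : ℝ) ^ 2 := by exact_mod_cast h2
  rw [znorm, show (1 : ℝ) = Real.sqrt 1 by simp]
  exact Real.sqrt_le_sqrt h1

lemma znorm_pos {k : ℤ × ℤ} (hk : k ≠ 0) : 0 < znorm k :=
  lt_of_lt_of_le one_pos (one_le_znorm hk)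

lemma znorm_triangle (h j : ℤ × ℤ) : znorm j ≤ znorm h + znorm (h - j) := by
  rw [znorm_eq_norm, znorm_eq_norm, znorm_eq_norm, zc_sub]
  calc ‖zc j‖ = ‖zc h - (zc h - zc j)‖ := by ring_nf
    _ ≤ ‖zc h‖ + ‖zc h - zc j‖ := norm_sub_le _ _

/-- Summability of `|k|^s` over nonzero lattice points for `s < -2`. -/
lemma summable_znorm_rpow {s : ℝ} (hs : s < -2) :
    Summable (fun k : {k : ℤ × ℤ // k ≠ 0} => znorm k.1 ^ s) := by
  have h1 : Summable fun x : Fin 2 → ℤ => ‖x‖ ^ s := by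
    have := EisensteinSeries.summable_one_div_norm_rpow (k := -s) (by linarith)
    simpa using this
  have h2 : Summable fun p : ℤ × ℤ => ‖![p.1, p.2]‖ ^ s := by
    have := ((finTwoArrowEquiv ℤ).symm.summable_iff (f := fun x : Fin 2 → ℤ => ‖x‖ ^ s)).2 h1
    simpa [finTwoArrowEquiv, Function.comp_def] using this
  have h3 : Summable (fun k : {k : ℤ × ℤ // k ≠ 0} => ‖![k.1.1, k.1.2]‖ ^ s) :=
    h2.comp_injective Subtype.val_injective
  apply Summable.of_nonneg_of_le (fun k => Real.rpow_nonneg (znorm_nonneg _) _) _ h3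
  intro k
  have hkpos : (0:ℝ) < ‖![k.1.1, k.1.2]‖ := by
    rw [norm_pos_iff]
    intro hc
    apply k.2
    have h0 : (![k.1.1, k.1.2] : Fin 2 → ℤ) 0 = 0 := by rw [hc]; rfl
    have h1' : (![k.1.1, k.1.2] : Fin 2 → ℤ) 1 = 0 := by rw [hc]; rfl
    simp at h0 h1'
    exact Prod.ext h0 h1'
  have hle : ‖![k.1.1, k.1.2]‖ ≤ znorm k.1 := by
    rw [EisensteinSeries.norm_eq_max_natAbs, znorm]
    simp only [Matrix.cons_val_zero, Matrix.cons_val_one, Matrix.head_cons]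
    rw [Nat.cast_max]
    apply max_le
    · rw [show ((k.1.1.natAbs : ℝ)) = |(k.1.1 : ℝ)| by simp [Nat.cast_natAbs]]
      rw [← Real.sqrt_sq_eq_abs]
      exact Real.sqrt_le_sqrt (by nlinarith [sq_nonneg ((k.1.2 : ℝ))])
    · rw [show ((k.1.2.natAbs : ℝ)) = |(k.1.2 : ℝ)| by simp [Nat.cast_natAbs]]
      rw [← Real.sqrt_sq_eq_abs]
      exact Real.sqrt_le_sqrt (by nlinarith [sq_nonneg ((k.1.1 : ℝ))])
  exact Real.rpow_le_rpow_of_nonpos hkpos hle (by linarith)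

set_option maxHeartbeats 1000000 in
theorem statement_13 (H ρ : ℝ) (hH1 : 1 / 2 < H) (hH2 : H < 1)
    (hρ1 : -1 < ρ) (hρ2 : ρ < 2 * (H - 1)) :
    Summable (fun j : {j : ℤ × ℤ // j ≠ 0} =>
      znorm j.1 ^ (2 * ρ + 2) *
        (∑' h : {h : ℤ × ℤ // h ≠ 0 ∧ h ≠ j.1},
            znorm h.1 ^ (2 * ρ + 2) /
              (znorm h.1 ^ (4 * H) * znorm (h.1 - j.1) ^ (4 * H))) ^ 2) := by
  set α := 2 * ρ + 2 with hα_def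
  have hα0 : 0 < α := by simp only [hα_def]; linarith
  have hα4H : α - 4 * H < -2 := by simp only [hα_def]; linarith
  have h4H : (-(4 * H)) < -2 := by linarith
  -- summable majorants
  have hA : Summable (fun k : {k : ℤ × ℤ // k ≠ 0} => znorm k.1 ^ (α - 4 * H)) :=
    summable_znorm_rpow hα4H
  have hB : Summable (fun k : {k : ℤ × ℤ // k ≠ 0} => znorm k.1 ^ (-(4 * H))) :=
    summable_znorm_rpow h4H
  set A := ∑' k : {k : ℤ × ℤ // k ≠ 0}, znorm k.1 ^ (α - 4 * H) with hA_def
  set B := ∑' k : {k : ℤ × ℤ // k ≠ 0}, znorm k.1 ^ (-(4 * H)) with hB_def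
  set C := (2 : ℝ) ^ (4 * H) * (A + B) with hC_def
  have hAnn : 0 ≤ A := tsum_nonneg (fun k => Real.rpow_nonneg (znorm_nonneg _) _)
  have hBnn : 0 ≤ B := tsum_nonneg (fun k => Real.rpow_nonneg (znorm_nonneg _) _)
  have hCnn : 0 ≤ C := by positivity
  -- Inner sum bound
  have key : ∀ j : {j : ℤ × ℤ // j ≠ 0},
      (∑' h : {h : ℤ × ℤ // h ≠ 0 ∧ h ≠ j.1},
        znorm h.1 ^ α / (znorm h.1 ^ (4 * H) * znorm (h.1 - j.1) ^ (4 * H)))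
      ≤ C * znorm j.1 ^ (α - 4 * H) := by
    intro j
    have hj1 : 1 ≤ znorm j.1 := one_le_znorm j.2
    have hjpos : 0 < znorm j.1 := znorm_pos j.2
    set g : {h : ℤ × ℤ // h ≠ 0 ∧ h ≠ j.1} → ℝ :=
      fun h => (2 : ℝ) ^ (4 * H) * znorm j.1 ^ (α - 4 * H) *
        (znorm h.1 ^ (α - 4 * H) + znorm (h.1 - j.1) ^ (-(4 * H))) with hg_def
    have hterm_le : ∀ h : {h : ℤ × ℤ // h ≠ 0 ∧ h ≠ j.1},
        znorm h.1 ^ α / (znorm h.1 ^ (4 * H) * znorm (h.1 - j.1) ^ (4 * H)) ≤ g h := by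
      intro h
      have hhpos : 0 < znorm h.1 := znorm_pos h.2.1
      have hhjne : h.1 - j.1 ≠ 0 := sub_ne_zero.2 h.2.2
      have hhjpos : 0 < znorm (h.1 - j.1) := znorm_pos hhjne
      have heq : znorm h.1 ^ α / (znorm h.1 ^ (4 * H) * znorm (h.1 - j.1) ^ (4 * H))
          = znorm h.1 ^ (α - 4 * H) * znorm (h.1 - j.1) ^ (-(4 * H)) := by
        rw [Real.rpow_sub hhpos, Real.rpow_neg hhjpos.le]; ring
      rw [heq, hg_def]
      rcases le_or_gt (2 * znorm h.1) (znorm j.1) with hcase | hcase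
      · -- |h| small: |h - j| ≥ |j|/2
        have htri : znorm j.1 / 2 ≤ znorm (h.1 - j.1) := by
          have := znorm_triangle h.1 j.1
          linarith
        have hb : znorm (h.1 - j.1) ^ (-(4 * H)) ≤ (znorm j.1 / 2) ^ (-(4 * H)) :=
          Real.rpow_le_rpow_of_nonpos (by linarith) htri (by linarith)
        have hb2 : (znorm j.1 / 2) ^ (-(4 * H)) = znorm j.1 ^ (-(4 * H)) * 2 ^ (4 * H) := by
          rw [Real.div_rpow hjpos.le (by norm_num), Real.rpow_neg hjpos.le,
            Real.rpow_neg (by norm_num : (0:ℝ) ≤ 2)]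
          field_simp
        have hb3 : znorm j.1 ^ (-(4 * H)) ≤ znorm j.1 ^ (α - 4 * H) :=
          Real.rpow_le_rpow_of_exponent_le hj1 (by linarith)
        calc znorm h.1 ^ (α - 4 * H) * znorm (h.1 - j.1) ^ (-(4 * H))
            ≤ znorm h.1 ^ (α - 4 * H) * (znorm j.1 ^ (-(4 * H)) * 2 ^ (4 * H)) := by
              rw [← hb2]
              exact mul_le_mul_of_nonneg_left hb (Real.rpow_nonneg hhpos.le _)
          _ ≤ znorm h.1 ^ (α - 4 * H) * (znorm j.1 ^ (α - 4 * H) * 2 ^ (4 * H)) := by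
              apply mul_le_mul_of_nonneg_left _ (Real.rpow_nonneg hhpos.le _)
              exact mul_le_mul_of_nonneg_right hb3 (Real.rpow_nonneg (by norm_num) _)
          _ ≤ 2 ^ (4 * H) * znorm j.1 ^ (α - 4 * H) *
              (znorm h.1 ^ (α - 4 * H) + znorm (h.1 - j.1) ^ (-(4 * H))) := by
              have h1 := Real.rpow_nonneg hhjpos.le (-(4 * H))
              have h2 := Real.rpow_nonneg (show (0:ℝ) ≤ 2 by norm_num) (4 * H)
              have h3 := Real.rpow_nonneg hjpos.le (α - 4 * H)
              nlinarith [mul_nonneg (mul_nonneg h2 h3) h1]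
      · -- |h| large: |h| > |j|/2
        have hgt : znorm j.1 / 2 < znorm h.1 := by linarith
        have hb : znorm h.1 ^ (α - 4 * H) ≤ (znorm j.1 / 2) ^ (α - 4 * H) :=
          Real.rpow_le_rpow_of_nonpos (by linarith) hgt.le (by linarith)
        have hb2 : (znorm j.1 / 2) ^ (α - 4 * H) ≤ znorm j.1 ^ (α - 4 * H) * 2 ^ (4 * H) := by
          rw [Real.div_rpow hjpos.le (by norm_num)]
          rw [div_le_iff₀ (Real.rpow_pos_of_pos (by norm_num) _)]
          rw [mul_assoc, ← Real.rpow_add (by norm_num : (0:ℝ) < 2)]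
          have : (1:ℝ) ≤ 2 ^ (4 * H + (α - 4 * H)) := by
            rw [show 4 * H + (α - 4 * H) = α by ring]
            exact Real.one_le_rpow (by norm_num) hα0.le
          nlinarith [Real.rpow_nonneg hjpos.le (α - 4 * H)]
        calc znorm h.1 ^ (α - 4 * H) * znorm (h.1 - j.1) ^ (-(4 * H))
            ≤ znorm j.1 ^ (α - 4 * H) * 2 ^ (4 * H) * znorm (h.1 - j.1) ^ (-(4 * H)) :=
              mul_le_mul_of_nonneg_right (hb.trans hb2) (Real.rpow_nonneg hhjpos.le _)
          _ ≤ 2 ^ (4 * H) * znorm j.1 ^ (α - 4 * H) *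
              (znorm h.1 ^ (α - 4 * H) + znorm (h.1 - j.1) ^ (-(4 * H))) := by
              have h1 := Real.rpow_nonneg hhjpos.le (-(4 * H))
              have h2 := Real.rpow_nonneg (show (0:ℝ) ≤ 2 by norm_num) (4 * H)
              have h3 := Real.rpow_nonneg hjpos.le (α - 4 * H)
              nlinarith [mul_nonneg (mul_nonneg h2 h3) (Real.rpow_nonneg hhpos.le (α - 4 * H))]
    -- summability of pieces
    let i1 : {h : ℤ × ℤ // h ≠ 0 ∧ h ≠ j.1} → {k : ℤ × ℤ // k ≠ 0} := fun h => ⟨h.1, h.2.1⟩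
    have hinj1 : Function.Injective i1 := fun a b hab => by
      apply Subtype.ext; simpa [i1, Subtype.ext_iff] using hab
    let i2 : {h : ℤ × ℤ // h ≠ 0 ∧ h ≠ j.1} → {k : ℤ × ℤ // k ≠ 0} :=
      fun h => ⟨h.1 - j.1, sub_ne_zero.2 h.2.2⟩
    have hinj2 : Function.Injective i2 := fun a b hab => by
      apply Subtype.ext
      have h' : (a.1 : ℤ × ℤ) - j.1 = b.1 - j.1 := by simpa [i2, Subtype.ext_iff] using hab
      exact sub_left_injective h'
    have hi1 : Summable (fun h : {h : ℤ × ℤ // h ≠ 0 ∧ h ≠ j.1} => znorm h.1 ^ (α - 4 * H)) := by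
      simpa [Function.comp_def, i1] using hA.comp_injective hinj1
    have hi2 : Summable (fun h : {h : ℤ × ℤ // h ≠ 0 ∧ h ≠ j.1} =>
        znorm (h.1 - j.1) ^ (-(4 * H))) := by
      simpa [Function.comp_def, i2] using hB.comp_injective hinj2
    have hgsum : Summable g := ((hi1.add hi2).mul_left _)
    have htermsum : Summable (fun h : {h : ℤ × ℤ // h ≠ 0 ∧ h ≠ j.1} =>
        znorm h.1 ^ α / (znorm h.1 ^ (4 * H) * znorm (h.1 - j.1) ^ (4 * H))) := by
      apply Summable.of_nonneg_of_le _ hterm_le hgsum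
      intro h
      exact div_nonneg (Real.rpow_nonneg (znorm_nonneg _) _)
        (mul_nonneg (Real.rpow_nonneg (znorm_nonneg _) _) (Real.rpow_nonneg (znorm_nonneg _) _))
    have ht1 : (∑' h : {h : ℤ × ℤ // h ≠ 0 ∧ h ≠ j.1}, znorm h.1 ^ (α - 4 * H)) ≤ A :=
      Summable.tsum_le_tsum_of_inj i1 hinj1 (fun c _ => Real.rpow_nonneg (znorm_nonneg _) _)
        (fun b => le_of_eq (by simp [i1])) hi1 hA
    have ht2 : (∑' h : {h : ℤ × ℤ // h ≠ 0 ∧ h ≠ j.1}, znorm (h.1 - j.1) ^ (-(4 * H))) ≤ B :=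
      Summable.tsum_le_tsum_of_inj i2 hinj2 (fun c _ => Real.rpow_nonneg (znorm_nonneg _) _)
        (fun b => le_of_eq (by simp [i2])) hi2 hB
    calc (∑' h : {h : ℤ × ℤ // h ≠ 0 ∧ h ≠ j.1},
          znorm h.1 ^ α / (znorm h.1 ^ (4 * H) * znorm (h.1 - j.1) ^ (4 * H)))
        ≤ ∑' h, g h := Summable.tsum_le_tsum hterm_le htermsum hgsum
      _ = (2 : ℝ) ^ (4 * H) * znorm j.1 ^ (α - 4 * H) *
          ((∑' h : {h : ℤ × ℤ // h ≠ 0 ∧ h ≠ j.1}, znorm h.1 ^ (α - 4 * H)) +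
           (∑' h : {h : ℤ × ℤ // h ≠ 0 ∧ h ≠ j.1}, znorm (h.1 - j.1) ^ (-(4 * H)))) := by
          rw [hg_def, tsum_mul_left, Summable.tsum_add hi1 hi2]
      _ ≤ (2 : ℝ) ^ (4 * H) * znorm j.1 ^ (α - 4 * H) * (A + B) := by
          apply mul_le_mul_of_nonneg_left (add_le_add ht1 ht2)
          positivity
      _ = C * znorm j.1 ^ (α - 4 * H) := by rw [hC_def]; ring
  -- outer sum
  have h3exp : 3 * α - 8 * H < -2 := by simp only [hα_def]; linarith
  have houter : Summable (fun j : {j : ℤ × ℤ // j ≠ 0} =>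
      C ^ 2 * znorm j.1 ^ (3 * α - 8 * H)) := (summable_znorm_rpow h3exp).mul_left _
  apply Summable.of_nonneg_of_le _ _ houter
  · intro j
    exact mul_nonneg (Real.rpow_nonneg (znorm_nonneg _) _) (sq_nonneg _)
  · intro j
    have hjpos : 0 < znorm j.1 := znorm_pos j.2
    have hS_nonneg : 0 ≤ (∑' h : {h : ℤ × ℤ // h ≠ 0 ∧ h ≠ j.1},
        znorm h.1 ^ α / (znorm h.1 ^ (4 * H) * znorm (h.1 - j.1) ^ (4 * H))) :=
      tsum_nonneg (fun h => div_nonneg (Real.rpow_nonneg (znorm_nonneg _) _)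
        (mul_nonneg (Real.rpow_nonneg (znorm_nonneg _) _) (Real.rpow_nonneg (znorm_nonneg _) _)))
    calc znorm j.1 ^ α * (∑' h : {h : ℤ × ℤ // h ≠ 0 ∧ h ≠ j.1},
          znorm h.1 ^ α / (znorm h.1 ^ (4 * H) * znorm (h.1 - j.1) ^ (4 * H))) ^ 2
        ≤ znorm j.1 ^ α * (C * znorm j.1 ^ (α - 4 * H)) ^ 2 := by
          apply mul_le_mul_of_nonneg_left _ (Real.rpow_nonneg (znorm_nonneg _) _)
          exact pow_le_pow_left₀ hS_nonneg (key j) 2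
      _ = C ^ 2 * znorm j.1 ^ (3 * α - 8 * H) := by
          rw [mul_pow, ← Real.rpow_natCast (znorm j.1 ^ (α - 4 * H)) 2,
            ← Real.rpow_mul hjpos.le, ← mul_assoc, mul_comm (znorm j.1 ^ α) (C ^ 2),
            mul_assoc, ← Real.rpow_add hjpos]
          congr 1
          push_cast
          ring
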